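/- Let g be a real constant, c ≠ 0 a real constant, z_b : ℝ → ℝ differentiable, and h, u, w, σ, p̄, p_b : ℝ → ℝ → ℝ continuously differentiable functions of (x,t). Assume that at every point (x,t) the hyperbolic SGN system holds: (i) ∂_t h + ∂_x(h·u) = 0; (ii) ∂_t(h·u) + ∂_x(h·u² + h·p̄) + g·h·∂_x h + (g·h + p_b)·∂_x z_b = 0; (iii) ∂_t(h·w) + ∂_x(h·u·w) = p_b; (iv) ∂_t(h·σ) + ∂_x(h·u·σ) = −6·p_b + 12·p̄; (v) ∂_t(h·p̄) + ∂_x[h·u·(p̄ + c²)] − c²·u·∂_x h = −c²·σ; (vi) ∂_t(h·p_b) + ∂_x(h·u·p_b) − 6·c²·u·∂_x z_b = −6·c²·(w − σ/2). Define the energy E := (h/2)·(u² + w² + g·(h + 2·z_b) + σ²/12 + p̄²/c² + p_b²/(6·c²)). Then at every point (x,t): ∂_t E + ∂_x[u·(E + g·h²/2 + h·p̄)] = 0. -/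

import Mathlib

/-- Partial derivative with respect to the first (space) argument. -/
noncomputable def pdx (f : ℝ → ℝ → ℝ) (x t : ℝ) : ℝ := deriv (fun x' => f x' t) x

/-- Partial derivative with respect to the second (time) argument. -/
noncomputable def pdt (f : ℝ → ℝ → ℝ) (x t : ℝ) : ℝ := deriv (fun t' => f x t') t

theorem stmt_6 (g c : ℝ) (hc : c ≠ 0) (zb : ℝ → ℝ) (hzb : Differentiable ℝ zb)
    (h u w sg pbar pb : ℝ → ℝ → ℝ)
    (hh : ContDiff ℝ 1 (fun p : ℝ × ℝ => h p.1 p.2))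
    (hu : ContDiff ℝ 1 (fun p : ℝ × ℝ => u p.1 p.2))
    (hw : ContDiff ℝ 1 (fun p : ℝ × ℝ => w p.1 p.2))
    (hsg : ContDiff ℝ 1 (fun p : ℝ × ℝ => sg p.1 p.2))
    (hpbar : ContDiff ℝ 1 (fun p : ℝ × ℝ => pbar p.1 p.2))
    (hpb : ContDiff ℝ 1 (fun p : ℝ × ℝ => pb p.1 p.2))
    (mass : ∀ x t : ℝ, pdt h x t + pdx (fun x t => h x t * u x t) x t = 0)
    (momx : ∀ x t : ℝ,
      pdt (fun x t => h x t * u x t) x t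
        + pdx (fun x t => h x t * (u x t) ^ 2 + h x t * pbar x t) x t
        + g * h x t * pdx h x t + (g * h x t + pb x t) * deriv zb x = 0)
    (momz : ∀ x t : ℝ,
      pdt (fun x t => h x t * w x t) x t
        + pdx (fun x t => h x t * u x t * w x t) x t = pb x t)
    (sigmaEvol : ∀ x t : ℝ,
      pdt (fun x t => h x t * sg x t) x t
        + pdx (fun x t => h x t * u x t * sg x t) x t
      = -6 * pb x t + 12 * pbar x t)
    (pEvol : ∀ x t : ℝ,
      pdt (fun x t => h x t * pbar x t) x t
        + pdx (fun x t => h x t * u x t * (pbar x t + c ^ 2)) x t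
        - c ^ 2 * u x t * pdx h x t = -(c ^ 2) * sg x t)
    (pbEvol : ∀ x t : ℝ,
      pdt (fun x t => h x t * pb x t) x t
        + pdx (fun x t => h x t * u x t * pb x t) x t
        - 6 * c ^ 2 * u x t * deriv zb x
      = -(6 * c ^ 2) * (w x t - sg x t / 2)) :
    ∀ x t : ℝ,
      pdt (fun x t => h x t / 2 *
          ((u x t) ^ 2 + (w x t) ^ 2 + g * (h x t + 2 * zb x)
            + (sg x t) ^ 2 / 12 + (pbar x t) ^ 2 / c ^ 2 + (pb x t) ^ 2 / (6 * c ^ 2))) x t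
        + pdx (fun x t =>
            u x t * (h x t / 2 *
                ((u x t) ^ 2 + (w x t) ^ 2 + g * (h x t + 2 * zb x)
                  + (sg x t) ^ 2 / 12 + (pbar x t) ^ 2 / c ^ 2 + (pb x t) ^ 2 / (6 * c ^ 2))
              + g * (h x t) ^ 2 / 2 + h x t * pbar x t)) x t = 0 := by

  intro x t
  have hc2 : (c : ℝ) ^ 2 ≠ 0 := pow_ne_zero 2 hc
  have hck : c ^ 2 * (c ^ 2)⁻¹ = 1 := mul_inv_cancel₀ hc2
  have basic : ∀ (f : ℝ → ℝ → ℝ), ContDiff ℝ 1 (fun p : ℝ × ℝ => f p.1 p.2) →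
      HasDerivAt (fun x' => f x' t) (pdx f x t) x ∧ HasDerivAt (fun t' => f x t') (pdt f x t) t := by
    intro f hf
    have hd := hf.differentiable one_ne_zero
    constructor
    · have hdx : DifferentiableAt ℝ (fun x' => f x' t) x :=
        (hd.comp (differentiable_id.prodMk (differentiable_const t))).differentiableAt
      exact hdx.hasDerivAt
    · have hdt : DifferentiableAt ℝ (fun t' => f x t') t :=
        (hd.comp ((differentiable_const x).prodMk differentiable_id)).differentiableAt
      exact hdt.hasDerivAt
  obtain ⟨dxh, dth⟩ := basic h hh
  obtain ⟨dxu, dtu⟩ := basic u hu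
  obtain ⟨dxw, dtw⟩ := basic w hw
  obtain ⟨dxsg, dtsg⟩ := basic sg hsg
  obtain ⟨dxpbar, dtpbar⟩ := basic pbar hpbar
  obtain ⟨dxpb, dtpb⟩ := basic pb hpb
  have dzb : HasDerivAt zb (deriv zb x) x := (hzb x).hasDerivAt
  have e1 := mass x t
  have e2 := momx x t
  have e3 := momz x t
  have e4 := sigmaEvol x t
  have e5 := pEvol x t
  have e6 := pbEvol x t
  have d1 := (dxh.mul dxu).deriv
  have d2 := (dth.mul dtu).deriv
  have d3 := ((dxh.mul (dxu.pow (n := 2))).add (dxh.mul dxpbar)).deriv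
  have d4 := (dth.mul dtw).deriv
  have d5 := ((dxh.mul dxu).mul dxw).deriv
  have d6 := (dth.mul dtsg).deriv
  have d7 := ((dxh.mul dxu).mul dxsg).deriv
  have d8 := (dth.mul dtpbar).deriv
  have d9 := ((dxh.mul dxu).mul (dxpbar.add_const (c ^ 2))).deriv
  have d10 := (dth.mul dtpb).deriv
  have d11 := ((dxh.mul dxu).mul dxpb).deriv
  have d12 := ((dth.div_const 2).mul
      ((((((dtu.pow (n := 2)).add (dtw.pow (n := 2))).add
            ((dth.add_const (2 * zb x)).const_mul g)).add
          ((dtsg.pow (n := 2)).div_const 12)).add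
        ((dtpbar.pow (n := 2)).div_const (c ^ 2))).add
        ((dtpb.pow (n := 2)).div_const (6 * c ^ 2)))).deriv
  have d13 := (dxu.mul
      ((((dxh.div_const 2).mul
          ((((((dxu.pow (n := 2)).add (dxw.pow (n := 2))).add
                ((dxh.add (dzb.const_mul 2)).const_mul g)).add
              ((dxsg.pow (n := 2)).div_const 12)).add
            ((dxpbar.pow (n := 2)).div_const (c ^ 2))).add
            ((dxpb.pow (n := 2)).div_const (6 * c ^ 2)))).add
        (((dxh.pow (n := 2)).const_mul g).div_const 2)).add
        (dxh.mul dxpbar))).deriv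
  simp only [pdx, pdt, Pi.mul_def, Pi.add_def, Pi.pow_def] at d1 d2 d3 d4 d5 d6 d7 d8 d9 d10 d11 d12 d13 e1 e2 e3 e4 e5 e6 ⊢
  rw [d1] at e1
  rw [d2, d3] at e2
  rw [d4, d5] at e3
  rw [d6, d7] at e4
  rw [d8, d9] at e5
  rw [d10, d11] at e6
  rw [d12, d13]
  linear_combination
      (g * h x t + g * zb x -
        ((u x t) ^ 2 + (w x t) ^ 2 + (sg x t) ^ 2 / 12 + (pbar x t) ^ 2 * (c ^ 2)⁻¹ +
          (pb x t) ^ 2 * (c ^ 2)⁻¹ / 6) / 2) * e1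
    + u x t * e2 + w x t * e3 + sg x t / 12 * e4
    + pbar x t * (c ^ 2)⁻¹ * e5 + pb x t * (c ^ 2)⁻¹ / 6 * e6
    + (-(h x t * pbar x t * deriv (fun x' => u x' t) x) - pbar x t * sg x t
        + pb x t * sg x t / 2 + pb x t * u x t * deriv zb x - pb x t * w x t) * hck
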